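/- Let $B \in \mathbb{R}^{n\times m}$ have full column rank with QR factorization $B = Q_1 R$, where $Q = [Q_1\ Q_2]$ is orthogonal and $R$ is invertible. Let $X \in \mathbb{R}^{n\times n}$ be nonsingular, $P \in \mathbb{R}^{n\times n}$ orthogonal, and $S, T \in \mathbb{R}^{n\times n}$. Define $F = R^{-1}Q_1^\top(XSP^\top - A)$ and $G = R^{-1}Q_1^\top(XTP^\top - E)$. Then $(A + BF)P = XS$ and $(E + BG)P = XT$ hold if and only if $Q_2^\top(AP - XS) = 0$ and $Q_2^\top(EP - XT) = 0$. -/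

import Mathlib

open Matrix

/-- with `F = R⁻¹Q₁ᵀ(XSPᵀ - A)`, `G = R⁻¹Q₁ᵀ(XTPᵀ - E)`, one has
`(A + BF)P = XS` and `(E + BG)P = XT` iff `Q₂ᵀ(AP - XS) = 0` and `Q₂ᵀ(EP - XT) = 0`. -/
theorem stmt18 {n m k : ℕ} (hn : m + k = n)
    (A E : Matrix (Fin n) (Fin n) ℝ) (B : Matrix (Fin n) (Fin m) ℝ)
    (Q1 : Matrix (Fin n) (Fin m) ℝ) (Q2 : Matrix (Fin n) (Fin k) ℝ)
    (R : Matrix (Fin m) (Fin m) ℝ)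
    (hQ : (fromCols Q1 Q2)ᵀ * fromCols Q1 Q2 = 1)
    (hQ' : fromCols Q1 Q2 * (fromCols Q1 Q2)ᵀ = 1)
    (hB : B = Q1 * R) (hR : IsUnit R.det)
    (X P S T : Matrix (Fin n) (Fin n) ℝ)
    (hX : IsUnit X.det) (hP : Pᵀ * P = 1) (hP' : P * Pᵀ = 1)
    (F G : Matrix (Fin m) (Fin n) ℝ)
    (hF : F = R⁻¹ * Q1ᵀ * (X * S * Pᵀ - A))
    (hG : G = R⁻¹ * Q1ᵀ * (X * T * Pᵀ - E)) :
    ((A + B * F) * P = X * S ∧ (E + B * G) * P = X * T) ↔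
      (Q2ᵀ * (A * P - X * S) = 0 ∧ Q2ᵀ * (E * P - X * T) = 0) := by
  rw [transpose_fromCols, fromRows_mul_fromCols, ← fromBlocks_one,
    fromBlocks_inj] at hQ
  rw [transpose_fromCols, fromCols_mul_fromRows] at hQ'
  have h22 : Q2ᵀ * Q2 = 1 := hQ.2.2.2
  have hsum : Q1 * Q1ᵀ + Q2 * Q2ᵀ = 1 := hQ'
  have hRR : R * R⁻¹ = 1 := mul_nonsing_inv _ hR
  have hBmul : ∀ W : Matrix (Fin n) (Fin n) ℝ,
      Q1 * R * (R⁻¹ * Q1ᵀ * W) = Q1 * Q1ᵀ * W := by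
    intro W
    simp only [Matrix.mul_assoc]
    rw [← Matrix.mul_assoc R R⁻¹, hRR, Matrix.one_mul]
  have key : ∀ (M W : Matrix (Fin n) (Fin n) ℝ),
      ((M + Q1 * Q1ᵀ * (W * Pᵀ - M)) * P = W ↔ Q2ᵀ * (M * P - W) = 0) := by
    intro M W
    have h1 : Q1 * Q1ᵀ = 1 - Q2 * Q2ᵀ := by
      rw [← hsum]; abel
    have hWP : (W * Pᵀ - M) * P = W - M * P := by
      rw [Matrix.sub_mul, Matrix.mul_assoc, hP, Matrix.mul_one]
    have hform : (M + Q1 * Q1ᵀ * (W * Pᵀ - M)) * P = W - Q2 * Q2ᵀ * (W - M * P) := by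
      rw [h1, Matrix.add_mul, Matrix.mul_assoc, hWP, Matrix.sub_mul,
        Matrix.one_mul, Matrix.mul_sub]
      abel
    rw [hform]
    constructor
    · intro h
      have h2 : Q2 * Q2ᵀ * (W - M * P) = 0 := by
        have := sub_eq_iff_eq_add.mp h
        have := (add_eq_left).mp this.symm
        simpa using this
      have h3 : Q2ᵀ * (W - M * P) = 0 := by
        have h3' : Q2ᵀ * (Q2 * Q2ᵀ * (W - M * P)) = 0 := by
          rw [h2, Matrix.mul_zero]
        rwa [Matrix.mul_assoc Q2 Q2ᵀ, ← Matrix.mul_assoc Q2ᵀ Q2, h22,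
          Matrix.one_mul] at h3'
      have : M * P - W = -(W - M * P) := by abel
      rw [this, Matrix.mul_neg, h3, neg_zero]
    · intro h
      have h4 : Q2ᵀ * (W - M * P) = 0 := by
        have : W - M * P = -(M * P - W) := by abel
        rw [this, Matrix.mul_neg, h, neg_zero]
      rw [Matrix.mul_assoc, h4, Matrix.mul_zero, sub_zero]
  have e1 : (A + B * F) * P = (A + Q1 * Q1ᵀ * (X * S * Pᵀ - A)) * P := by
    rw [hB, hF, hBmul]
  have e2 : (E + B * G) * P = (E + Q1 * Q1ᵀ * (X * T * Pᵀ - E)) * P := by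
    rw [hB, hG, hBmul]
  rw [e1, e2]
  exact and_congr (key A (X * S)) (key E (X * T))
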